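/- (The spacetime algebra is the 2×2 quaternionic matrix algebra.) The real Clifford algebra Cℓ(1,3) of the Minkowski quadratic form of signature (1,3) on ℝ⁴ is isomorphic as an ℝ-algebra to the algebra of 2×2 matrices over the quaternions: Cℓ(1,3) ≃ₐ[ℝ] Matrix (Fin 2) (Fin 2) ℍ. -/

import Mathlib

noncomputable def Q13 : QuadraticForm ℝ (Fin 4 → ℝ) :=
  QuadraticMap.weightedSumSquares ℝ ![(1 : ℝ), -1, -1, -1]

noncomputable def e (i : Fin 4) : CliffordAlgebra Q13 :=
  CliffordAlgebra.ι Q13 (Pi.single i 1)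

lemma Q13_single (i : Fin 4) : Q13 (Pi.single i 1) = ![(1:ℝ),-1,-1,-1] i := by
  simp [Q13, QuadraticMap.weightedSumSquares_apply, Pi.single_apply]

lemma e_sq (i : Fin 4) : e i * e i = algebraMap ℝ _ (![(1:ℝ),-1,-1,-1] i) := by
  rw [e, CliffordAlgebra.ι_sq_scalar, Q13_single]

lemma e_sq0 : e 0 * e 0 = 1 := by rw [e_sq]; simp
lemma e_sq1 : e 1 * e 1 = -1 := by rw [e_sq]; simp
lemma e_sq2 : e 2 * e 2 = -1 := by rw [e_sq]; simp
lemma e_sq3 : e 3 * e 3 = -1 := by rw [e_sq]; simp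

lemma e_swap {i j : Fin 4} (h : i ≠ j) : e j * e i = -(e i * e j) := by
  have key := CliffordAlgebra.ι_mul_ι_add_swap (Q := Q13) (Pi.single i 1) (Pi.single j 1)
  have hp : QuadraticMap.polar Q13 (Pi.single i (1:ℝ)) (Pi.single j 1) = 0 := by
    rw [QuadraticMap.polar]
    simp only [Q13, QuadraticMap.weightedSumSquares_apply, Pi.add_apply, Pi.single_apply]
    rw [Fin.sum_univ_four, Fin.sum_univ_four, Fin.sum_univ_four]
    fin_cases i <;> fin_cases j <;> simp_all (config := {decide := true}) [Fin.ext_iff]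
  rw [hp, map_zero] at key
  exact eq_neg_of_add_eq_zero_left (by rw [e, e]; linear_combination (norm := noncomm_ring) key)

-- oriented swap lemmas
lemma s10 : e 1 * e 0 = -(e 0 * e 1) := e_swap (by decide)
lemma s20 : e 2 * e 0 = -(e 0 * e 2) := e_swap (by decide)
lemma s30 : e 3 * e 0 = -(e 0 * e 3) := e_swap (by decide)
lemma s21 : e 2 * e 1 = -(e 1 * e 2) := e_swap (by decide)
lemma s31 : e 3 * e 1 = -(e 1 * e 3) := e_swap (by decide)
lemma s32 : e 3 * e 2 = -(e 2 * e 3) := e_swap (by decide)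

lemma s10' (x) : e 1 * (e 0 * x) = -(e 0 * (e 1 * x)) := by
  rw [← mul_assoc, s10, ← mul_assoc]; simp [neg_mul]
lemma s20' (x) : e 2 * (e 0 * x) = -(e 0 * (e 2 * x)) := by
  rw [← mul_assoc, s20, ← mul_assoc]; simp [neg_mul]
lemma s30' (x) : e 3 * (e 0 * x) = -(e 0 * (e 3 * x)) := by
  rw [← mul_assoc, s30, ← mul_assoc]; simp [neg_mul]
lemma s21' (x) : e 2 * (e 1 * x) = -(e 1 * (e 2 * x)) := by
  rw [← mul_assoc, s21, ← mul_assoc]; simp [neg_mul]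
lemma s31' (x) : e 3 * (e 1 * x) = -(e 1 * (e 3 * x)) := by
  rw [← mul_assoc, s31, ← mul_assoc]; simp [neg_mul]
lemma s32' (x) : e 3 * (e 2 * x) = -(e 2 * (e 3 * x)) := by
  rw [← mul_assoc, s32, ← mul_assoc]; simp [neg_mul]

lemma q0' (x) : e 0 * (e 0 * x) = x := by rw [← mul_assoc, e_sq0, one_mul]
lemma q1' (x) : e 1 * (e 1 * x) = -x := by rw [← mul_assoc, e_sq1, neg_one_mul]
lemma q2' (x) : e 2 * (e 2 * x) = -x := by rw [← mul_assoc, e_sq2, neg_one_mul]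
lemma q3' (x) : e 3 * (e 3 * x) = -x := by rw [← mul_assoc, e_sq3, neg_one_mul]

noncomputable def b : Fin 16 → CliffordAlgebra Q13 :=
  ![1, e 0, e 1, e 2, e 3,
    e 0 * e 1, e 0 * e 2, e 0 * e 3, e 1 * e 2, e 1 * e 3, e 2 * e 3,
    e 0 * (e 1 * e 2), e 0 * (e 1 * e 3), e 0 * (e 2 * e 3), e 1 * (e 2 * e 3),
    e 0 * (e 1 * (e 2 * e 3))]

noncomputable def S : Submodule ℝ (CliffordAlgebra Q13) := Submodule.span ℝ (Set.range b)

set_option maxHeartbeats 2000000 in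
lemma mul64 (i : Fin 4) (t : Fin 16) : e i * b t ∈ S := by
  have m0 : (1 : CliffordAlgebra Q13) ∈ S := Submodule.subset_span ⟨0, rfl⟩
  have m1 : e 0 ∈ S := Submodule.subset_span ⟨1, rfl⟩
  have m2 : e 1 ∈ S := Submodule.subset_span ⟨2, rfl⟩
  have m3 : e 2 ∈ S := Submodule.subset_span ⟨3, rfl⟩
  have m4 : e 3 ∈ S := Submodule.subset_span ⟨4, rfl⟩
  have m5 : e 0 * e 1 ∈ S := Submodule.subset_span ⟨5, rfl⟩
  have m6 : e 0 * e 2 ∈ S := Submodule.subset_span ⟨6, rfl⟩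
  have m7 : e 0 * e 3 ∈ S := Submodule.subset_span ⟨7, rfl⟩
  have m8 : e 1 * e 2 ∈ S := Submodule.subset_span ⟨8, rfl⟩
  have m9 : e 1 * e 3 ∈ S := Submodule.subset_span ⟨9, rfl⟩
  have m10 : e 2 * e 3 ∈ S := Submodule.subset_span ⟨10, rfl⟩
  have m11 : e 0 * (e 1 * e 2) ∈ S := Submodule.subset_span ⟨11, rfl⟩
  have m12 : e 0 * (e 1 * e 3) ∈ S := Submodule.subset_span ⟨12, rfl⟩
  have m13 : e 0 * (e 2 * e 3) ∈ S := Submodule.subset_span ⟨13, rfl⟩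
  have m14 : e 1 * (e 2 * e 3) ∈ S := Submodule.subset_span ⟨14, rfl⟩
  have m15 : e 0 * (e 1 * (e 2 * e 3)) ∈ S := Submodule.subset_span ⟨15, rfl⟩
  fin_cases i <;> fin_cases t <;>
    norm_num [b, show ((⟨2, by omega⟩ : Fin 4)) = 2 from rfl,
      show ((⟨3, by omega⟩ : Fin 4)) = 3 from rfl, Matrix.cons_val_two, Matrix.cons_val_three] <;>
    (try simp only [mul_assoc, s10', s20', s30', s21', s31', s32', s10, s20, s30, s21, s31, s32,
      q0', q1', q2', q3', e_sq0, e_sq1, e_sq2, e_sq3, mul_neg, neg_neg, mul_one, neg_mul]) <;>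
    solve_by_elim [neg_mem, m0, m1, m2, m3, m4, m5, m6, m7, m8, m9, m10, m11, m12, m13, m14, m15]

lemma ι_eq_sum (v : Fin 4 → ℝ) : CliffordAlgebra.ι Q13 v = ∑ i, v i • e i := by
  have hv : ∑ i, v i • (Pi.single i 1 : Fin 4 → ℝ) = v := by
    funext j
    simp [Pi.single_apply, Finset.sum_apply]
  conv_lhs => rw [← hv]
  simp [e]

lemma span_top : S = ⊤ := by
  rw [Submodule.eq_top_iff']
  intro x
  have main : ∀ y ∈ S, x * y ∈ S := by
    induction x using CliffordAlgebra.induction with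
    | algebraMap r => intro y hy; rw [Algebra.algebraMap_eq_smul_one, smul_mul_assoc, one_mul]
                      exact S.smul_mem r hy
    | ι v => intro y hy
             rw [ι_eq_sum, Finset.sum_mul]
             refine Submodule.sum_mem _ fun i _ => ?_
             rw [smul_mul_assoc]
             refine S.smul_mem _ ?_
             induction hy using Submodule.span_induction with
             | mem z hz => obtain ⟨t, rfl⟩ := hz; exact mul64 i t
             | zero => simp
             | add a b _ _ ha hb => rw [mul_add]; exact S.add_mem ha hb
             | smul r a _ ha => rw [mul_smul_comm]; exact S.smul_mem r ha
    | mul a c ha hc => intro y hy; rw [mul_assoc]; exact ha _ (hc _ hy)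
    | add a c ha hc => intro y hy; rw [add_mul]; exact S.add_mem (ha _ hy) (hc _ hy)
  simpa using main 1 (Submodule.subset_span ⟨0, rfl⟩)

abbrev M2H := Matrix (Fin 2) (Fin 2) (Quaternion ℝ)

noncomputable def qt (a b c d : ℝ) : Quaternion ℝ := ⟨a, b, c, d⟩

@[simp] lemma qt_re (a b c d : ℝ) : (qt a b c d).re = a := rfl
@[simp] lemma qt_imI (a b c d : ℝ) : (qt a b c d).imI = b := rfl
@[simp] lemma qt_imJ (a b c d : ℝ) : (qt a b c d).imJ = c := rfl
@[simp] lemma qt_imK (a b c d : ℝ) : (qt a b c d).imK = d := rfl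
@[simp] lemma q0_re : QuaternionAlgebra.re (0 : Quaternion ℝ) = 0 := rfl
@[simp] lemma q0_imI : QuaternionAlgebra.imI (0 : Quaternion ℝ) = 0 := rfl
@[simp] lemma q0_imJ : QuaternionAlgebra.imJ (0 : Quaternion ℝ) = 0 := rfl
@[simp] lemma q0_imK : QuaternionAlgebra.imK (0 : Quaternion ℝ) = 0 := rfl
@[simp] lemma q1_re : QuaternionAlgebra.re (1 : Quaternion ℝ) = 1 := rfl
@[simp] lemma q1_imI : QuaternionAlgebra.imI (1 : Quaternion ℝ) = 0 := rfl
@[simp] lemma q1_imJ : QuaternionAlgebra.imJ (1 : Quaternion ℝ) = 0 := rfl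
@[simp] lemma q1_imK : QuaternionAlgebra.imK (1 : Quaternion ℝ) = 0 := rfl

noncomputable def γ : Fin 4 → M2H :=
  ![!![(qt 1 0 0 0), 0; 0, (qt (-1) 0 0 0)],
    !![0, (qt 0 1 0 0); (qt 0 1 0 0), 0],
    !![0, (qt 0 0 1 0); (qt 0 0 1 0), 0],
    !![0, (qt 0 0 0 1); (qt 0 0 0 1), 0]]

noncomputable def lm : (Fin 4 → ℝ) →ₗ[ℝ] M2H where
  toFun v := ∑ i, v i • γ i
  map_add' x y := by simp [add_smul, Finset.sum_add_distrib]
  map_smul' c x := by simp [smul_smul, Finset.smul_sum]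

lemma lm_cond (v : Fin 4 → ℝ) : lm v * lm v = algebraMap ℝ M2H (Q13 v) := by
  refine Matrix.ext fun i j => ?_
  simp only [lm, LinearMap.coe_mk, AddHom.coe_mk, Q13, QuadraticMap.weightedSumSquares_apply]
  rw [Fin.sum_univ_four, Fin.sum_univ_four]
  fin_cases i <;> fin_cases j <;>
    simp [γ, Matrix.mul_apply, Fin.sum_univ_succ, Matrix.algebraMap_matrix_apply,
      Quaternion.ext_iff, Matrix.smul_apply, Matrix.one_apply, QuaternionAlgebra.ext_iff] <;>
    (try ring) <;> simp

noncomputable def F : CliffordAlgebra Q13 →ₐ[ℝ] M2H :=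
  CliffordAlgebra.lift Q13 ⟨lm, lm_cond⟩

lemma F_e (i : Fin 4) : F (e i) = γ i := by
  rw [e, F, CliffordAlgebra.lift_ι_apply]
  simp only [lm, LinearMap.coe_mk, AddHom.coe_mk]
  rw [Fin.sum_univ_four]
  fin_cases i <;> simp [Pi.single_apply, show ((⟨2, by omega⟩ : Fin 4)) = 2 from rfl,
    show ((⟨3, by omega⟩ : Fin 4)) = 3 from rfl]

noncomputable def g : Fin 16 → M2H :=
  ![!![(qt 1 0 0 0), 0; 0, (qt 1 0 0 0)],
    !![(qt 1 0 0 0), 0; 0, (qt (-1) 0 0 0)],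
    !![0, (qt 0 1 0 0); (qt 0 1 0 0), 0],
    !![0, (qt 0 0 1 0); (qt 0 0 1 0), 0],
    !![0, (qt 0 0 0 1); (qt 0 0 0 1), 0],
    !![0, (qt 0 1 0 0); (qt 0 (-1) 0 0), 0],
    !![0, (qt 0 0 1 0); (qt 0 0 (-1) 0), 0],
    !![0, (qt 0 0 0 1); (qt 0 0 0 (-1)), 0],
    !![(qt 0 0 0 1), 0; 0, (qt 0 0 0 1)],
    !![(qt 0 0 (-1) 0), 0; 0, (qt 0 0 (-1) 0)],
    !![(qt 0 1 0 0), 0; 0, (qt 0 1 0 0)],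
    !![(qt 0 0 0 1), 0; 0, (qt 0 0 0 (-1))],
    !![(qt 0 0 (-1) 0), 0; 0, (qt 0 0 1 0)],
    !![(qt 0 1 0 0), 0; 0, (qt 0 (-1) 0 0)],
    !![0, (qt (-1) 0 0 0); (qt (-1) 0 0 0), 0],
    !![0, (qt (-1) 0 0 0); (qt 1 0 0 0), 0]]

set_option maxHeartbeats 2000000 in
lemma F_b (t : Fin 16) : F (b t) = g t := by
  fin_cases t <;>
    norm_num [b, g, map_mul, map_one, F_e] <;>
    refine Matrix.ext fun i j => ?_ <;>
    fin_cases i <;> fin_cases j <;>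
    simp [γ, Matrix.mul_apply, Fin.sum_univ_succ, Quaternion.ext_iff, Matrix.one_apply,
      QuaternionAlgebra.ext_iff] <;>
    norm_num

lemma sum16 {M : Type*} [AddCommMonoid M] (f : Fin 16 → M) :
    ∑ t, f t = f 0 + f 1 + f 2 + f 3 + f 4 + f 5 + f 6 + f 7 + f 8 + f 9 + f 10 + f 11 + f 12
      + f 13 + f 14 + f 15 := by
  rw [show (Finset.univ : Finset (Fin 16)) = {0,1,2,3,4,5,6,7,8,9,10,11,12,13,14,15} from rfl]
  simp [Finset.sum_insert, add_assoc]

set_option maxHeartbeats 2000000 in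
lemma g_indep : LinearIndependent ℝ g := by
  rw [Fintype.linearIndependent_iff]
  intro c hc
  have key : ∀ i j : Fin 2, (∑ t, c t • g t) i j = 0 := by
    intro i j; rw [hc]; rfl
  have h00 := key 0 0
  have h01 := key 0 1
  have h10 := key 1 0
  have h11 := key 1 1
  rw [sum16] at h00 h01 h10 h11
  simp only [Matrix.add_apply, Matrix.smul_apply] at h00 h01 h10 h11
  simp only [show g 0 = !![(qt 1 0 0 0), 0; 0, (qt 1 0 0 0)] from rfl,
    show g 1 = !![(qt 1 0 0 0), 0; 0, (qt (-1) 0 0 0)] from rfl,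
    show g 2 = !![0, (qt 0 1 0 0); (qt 0 1 0 0), 0] from rfl,
    show g 3 = !![0, (qt 0 0 1 0); (qt 0 0 1 0), 0] from rfl,
    show g 4 = !![0, (qt 0 0 0 1); (qt 0 0 0 1), 0] from rfl,
    show g 5 = !![0, (qt 0 1 0 0); (qt 0 (-1) 0 0), 0] from rfl,
    show g 6 = !![0, (qt 0 0 1 0); (qt 0 0 (-1) 0), 0] from rfl,
    show g 7 = !![0, (qt 0 0 0 1); (qt 0 0 0 (-1)), 0] from rfl,
    show g 8 = !![(qt 0 0 0 1), 0; 0, (qt 0 0 0 1)] from rfl,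
    show g 9 = !![(qt 0 0 (-1) 0), 0; 0, (qt 0 0 (-1) 0)] from rfl,
    show g 10 = !![(qt 0 1 0 0), 0; 0, (qt 0 1 0 0)] from rfl,
    show g 11 = !![(qt 0 0 0 1), 0; 0, (qt 0 0 0 (-1))] from rfl,
    show g 12 = !![(qt 0 0 (-1) 0), 0; 0, (qt 0 0 1 0)] from rfl,
    show g 13 = !![(qt 0 1 0 0), 0; 0, (qt 0 (-1) 0 0)] from rfl,
    show g 14 = !![0, (qt (-1) 0 0 0); (qt (-1) 0 0 0), 0] from rfl,
    show g 15 = !![0, (qt (-1) 0 0 0); (qt 1 0 0 0), 0] from rfl] at h00 h01 h10 h11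
  norm_num [Quaternion.ext_iff, QuaternionAlgebra.ext_iff] at h00 h01 h10 h11
  obtain ⟨a1, a2, a3, a4⟩ := h00
  obtain ⟨b1, b2, b3, b4⟩ := h01
  obtain ⟨c1, c2, c3, c4⟩ := h10
  obtain ⟨d1, d2, d3, d4⟩ := h11
  intro t
  fin_cases t <;>
    simp only [show ((⟨0, by omega⟩ : Fin 16)) = 0 from rfl,
    show ((⟨1, by omega⟩ : Fin 16)) = 1 from rfl,
    show ((⟨2, by omega⟩ : Fin 16)) = 2 from rfl,
    show ((⟨3, by omega⟩ : Fin 16)) = 3 from rfl,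
    show ((⟨4, by omega⟩ : Fin 16)) = 4 from rfl,
    show ((⟨5, by omega⟩ : Fin 16)) = 5 from rfl,
    show ((⟨6, by omega⟩ : Fin 16)) = 6 from rfl,
    show ((⟨7, by omega⟩ : Fin 16)) = 7 from rfl,
    show ((⟨8, by omega⟩ : Fin 16)) = 8 from rfl,
    show ((⟨9, by omega⟩ : Fin 16)) = 9 from rfl,
    show ((⟨10, by omega⟩ : Fin 16)) = 10 from rfl,
    show ((⟨11, by omega⟩ : Fin 16)) = 11 from rfl,
    show ((⟨12, by omega⟩ : Fin 16)) = 12 from rfl,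
    show ((⟨13, by omega⟩ : Fin 16)) = 13 from rfl,
    show ((⟨14, by omega⟩ : Fin 16)) = 14 from rfl,
    show ((⟨15, by omega⟩ : Fin 16)) = 15 from rfl] <;> linarith

lemma finrank_M2H : Module.finrank ℝ M2H = 16 := by
  show Module.finrank ℝ (Fin 2 → Fin 2 → Quaternion ℝ) = 16
  simp [Module.finrank_pi_fintype, Quaternion.finrank_eq_four]

lemma g_span : Submodule.span ℝ (Set.range g) = ⊤ :=
  g_indep.span_eq_top_of_card_eq_finrank (by simp [finrank_M2H])

lemma F_inj : Function.Injective F := by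
  rw [injective_iff_map_eq_zero]
  intro x hx
  have hxS : x ∈ S := span_top ▸ Submodule.mem_top
  rw [S] at hxS
  obtain ⟨c, rfl⟩ := (Submodule.mem_span_range_iff_exists_fun ℝ).1 hxS
  rw [map_sum] at hx
  simp_rw [map_smul, F_b] at hx
  have hz := Fintype.linearIndependent_iff.1 g_indep c hx
  simp [hz]

lemma F_surj : Function.Surjective F := by
  have hle : Submodule.span ℝ (Set.range g) ≤ LinearMap.range F.toLinearMap :=
    Submodule.span_le.2 (by rintro _ ⟨t, rfl⟩; exact ⟨b t, F_b t⟩)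
  intro y
  exact hle (g_span ▸ Submodule.mem_top)

/-- The spacetime algebra is the 2×2 quaternionic matrix algebra. -/
theorem spacetime_algebra_iso_quaternion_matrices :
    Nonempty (CliffordAlgebra Q13 ≃ₐ[ℝ] Matrix (Fin 2) (Fin 2) (Quaternion ℝ)) :=
  ⟨AlgEquiv.ofBijective F ⟨F_inj, F_surj⟩⟩
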